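/- For finite random variables A, B, E with E available to the encoder (admissible U satisfies p(u,a,b,e) = p(a,b,e)p(u|a,e)), the maximum of I(A;B|U) − I(A;E|U) over admissible U equals I(A;B|E), achieved by U = E. -/

import Mathlib

open Finset

/-- `w` is a probability mass function on the finite sample space `Ω`. -/
def IsPMF {Ω : Type} [Fintype Ω] (w : Ω → ℝ) : Prop :=
  (∀ ω, 0 ≤ w ω) ∧ ∑ ω, w ω = 1

open scoped Classical in
/-- Probability that the random variable `X` takes the value `x`. -/
noncomputable def pr {Ω : Type} [Fintype Ω] (w : Ω → ℝ) {α : Type} (X : Ω → α) (x : α) : ℝ :=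
  ∑ ω, if X ω = x then w ω else 0

/-- Shannon entropy (in bits) of the random variable `X`. -/
noncomputable def H {Ω : Type} [Fintype Ω] (w : Ω → ℝ) {α : Type} [Fintype α] (X : Ω → α) : ℝ :=
  -∑ x, pr w X x * Real.logb 2 (pr w X x)

/-- Conditional entropy `H(X|Y)`. -/
noncomputable def condH {Ω : Type} [Fintype Ω] (w : Ω → ℝ) {α β : Type} [Fintype α] [Fintype β]
    (X : Ω → α) (Y : Ω → β) : ℝ :=
  H w (fun ω => (X ω, Y ω)) - H w Y

/-- Mutual information `I(X;Y)`. -/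
noncomputable def MI {Ω : Type} [Fintype Ω] (w : Ω → ℝ) {α β : Type} [Fintype α] [Fintype β]
    (X : Ω → α) (Y : Ω → β) : ℝ :=
  H w X + H w Y - H w (fun ω => (X ω, Y ω))

/-- Conditional mutual information `I(X;Y|Z)`. -/
noncomputable def cMI {Ω : Type} [Fintype Ω] (w : Ω → ℝ) {α β γ : Type}
    [Fintype α] [Fintype β] [Fintype γ] (X : Ω → α) (Y : Ω → β) (Z : Ω → γ) : ℝ :=
  condH w X Z - condH w X (fun ω => (Y ω, Z ω))

/-- `X` and `Y` are conditionally independent given `Z`, i.e. the Markov chain `X − Z − Y`. -/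
def CondIndep {Ω : Type} [Fintype Ω] (w : Ω → ℝ) {α β γ : Type}
    (X : Ω → α) (Y : Ω → β) (Z : Ω → γ) : Prop :=
  ∀ x y z, pr w (fun ω => (X ω, Y ω, Z ω)) (x, y, z) * pr w Z z =
    pr w (fun ω => (X ω, Z ω)) (x, z) * pr w (fun ω => (Y ω, Z ω)) (y, z)

set_option linter.unusedSectionVars false
section Lemmas

open scoped Classical

variable {Ω : Type} [Fintype Ω] {w : Ω → ℝ}
variable {α β γ : Type}

lemma pr_nonneg (hw : ∀ ω, 0 ≤ w ω) (X : Ω → α) (x : α) : 0 ≤ pr w X x := by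
  unfold pr
  apply Finset.sum_nonneg
  intro ω _
  split <;> simp [hw ω]

lemma pr_congr {X : Ω → α} {Y : Ω → β} {x : α} {y : β} (h : ∀ ω, X ω = x ↔ Y ω = y) :
    pr w X x = pr w Y y := by
  unfold pr
  apply Finset.sum_congr rfl
  intro ω _
  simp only [h ω]

lemma pr_eq_zero {X : Ω → α} {x : α} (h : ∀ ω, X ω ≠ x) : pr w X x = 0 := by
  unfold pr
  apply Finset.sum_eq_zero
  intro ω _
  simp [h ω]

lemma pr_marg_XZ [Fintype β] (X : Ω → α) (Y : Ω → β) (Z : Ω → γ) (x : α) (z : γ) :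
    pr w (fun ω => (X ω, Z ω)) (x, z) = ∑ y, pr w (fun ω => (X ω, Y ω, Z ω)) (x, y, z) := by
  unfold pr
  rw [Finset.sum_comm]
  apply Finset.sum_congr rfl
  intro ω _
  by_cases hx : X ω = x <;> by_cases hz : Z ω = z <;>
    simp [hx, hz, Prod.ext_iff, Finset.sum_ite_eq]

lemma pr_marg_YZ [Fintype α] (X : Ω → α) (Y : Ω → β) (Z : Ω → γ) (y : β) (z : γ) :
    pr w (fun ω => (Y ω, Z ω)) (y, z) = ∑ x, pr w (fun ω => (X ω, Y ω, Z ω)) (x, y, z) := by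
  unfold pr
  rw [Finset.sum_comm]
  apply Finset.sum_congr rfl
  intro ω _
  by_cases hy : Y ω = y <;> by_cases hz : Z ω = z <;>
    simp [hy, hz, Prod.ext_iff, Finset.sum_ite_eq]

lemma pr_marg_pair [Fintype β] (Y : Ω → β) (Z : Ω → γ) (z : γ) :
    pr w Z z = ∑ y, pr w (fun ω => (Y ω, Z ω)) (y, z) := by
  unfold pr
  rw [Finset.sum_comm]
  apply Finset.sum_congr rfl
  intro ω _
  by_cases hz : Z ω = z <;>
    simp [hz, Prod.ext_iff, Finset.sum_ite_eq]

lemma pr_marg_Z [Fintype α] [Fintype β] (X : Ω → α) (Y : Ω → β) (Z : Ω → γ) (z : γ) :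
    pr w Z z = ∑ x, ∑ y, pr w (fun ω => (X ω, Y ω, Z ω)) (x, y, z) := by
  rw [pr_marg_pair Y Z z, Finset.sum_comm]
  apply Finset.sum_congr rfl
  intro y _
  exact pr_marg_YZ X Y Z y z

lemma H_comp [Fintype α] [Fintype β] {f : α → β} (hf : Function.Injective f) (X : Ω → α) :
    H w (fun ω => f (X ω)) = H w X := by
  unfold H
  congr 1
  rw [← Finset.sum_subset (Finset.subset_univ (Finset.univ.image f))]
  · rw [Finset.sum_image (fun a _ b _ h => hf h)]
    apply Finset.sum_congr rfl
    intro x _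
    have : pr w (fun ω => f (X ω)) (f x) = pr w X x := by
      apply pr_congr
      intro ω
      exact hf.eq_iff
    rw [this]
  · intro y _ hy
    have : pr w (fun ω => f (X ω)) y = 0 := by
      apply pr_eq_zero
      intro ω h
      exact hy (Finset.mem_image.2 ⟨X ω, Finset.mem_univ _, h⟩)
    rw [this]
    simp

lemma cMI_eq_sum [Fintype α] [Fintype β] [Fintype γ] (X : Ω → α) (Y : Ω → β) (Z : Ω → γ) :
    cMI w X Y Z = ∑ x, ∑ y, ∑ z,
      (pr w (fun ω => (X ω, Y ω, Z ω)) (x, y, z) *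
          Real.logb 2 (pr w (fun ω => (X ω, Y ω, Z ω)) (x, y, z))
        + pr w (fun ω => (X ω, Y ω, Z ω)) (x, y, z) * Real.logb 2 (pr w Z z)
        - pr w (fun ω => (X ω, Y ω, Z ω)) (x, y, z) *
            Real.logb 2 (pr w (fun ω => (X ω, Z ω)) (x, z))
        - pr w (fun ω => (X ω, Y ω, Z ω)) (x, y, z) *
            Real.logb 2 (pr w (fun ω => (Y ω, Z ω)) (y, z))) := by
  have e1 : H w (fun ω => (X ω, Y ω, Z ω)) =
      -∑ x, ∑ y, ∑ z, pr w (fun ω => (X ω, Y ω, Z ω)) (x, y, z) *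
        Real.logb 2 (pr w (fun ω => (X ω, Y ω, Z ω)) (x, y, z)) := by
    unfold H
    simp only [Fintype.sum_prod_type]
  have e2 : H w (fun ω => (X ω, Z ω)) =
      -∑ x, ∑ y, ∑ z, pr w (fun ω => (X ω, Y ω, Z ω)) (x, y, z) *
        Real.logb 2 (pr w (fun ω => (X ω, Z ω)) (x, z)) := by
    unfold H
    simp only [Fintype.sum_prod_type]
    congr 1
    apply Finset.sum_congr rfl
    intro x _
    rw [Finset.sum_comm]
    apply Finset.sum_congr rfl
    intro z _
    rw [pr_marg_XZ X Y Z x z, Finset.sum_mul]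
  have e3 : H w (fun ω => (Y ω, Z ω)) =
      -∑ x, ∑ y, ∑ z, pr w (fun ω => (X ω, Y ω, Z ω)) (x, y, z) *
        Real.logb 2 (pr w (fun ω => (Y ω, Z ω)) (y, z)) := by
    unfold H
    simp only [Fintype.sum_prod_type]
    congr 1
    conv_rhs => rw [Finset.sum_comm]
    apply Finset.sum_congr rfl
    intro y _
    conv_rhs => rw [Finset.sum_comm]
    apply Finset.sum_congr rfl
    intro z _
    rw [pr_marg_YZ X Y Z y z, Finset.sum_mul]
  have e4 : H w Z =
      -∑ x, ∑ y, ∑ z, pr w (fun ω => (X ω, Y ω, Z ω)) (x, y, z) *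
        Real.logb 2 (pr w Z z) := by
    unfold H
    congr 1
    conv_rhs => enter [2, x]; rw [Finset.sum_comm]
    conv_rhs => rw [Finset.sum_comm]
    apply Finset.sum_congr rfl
    intro z _
    rw [pr_marg_Z X Y Z z]
    simp only [Finset.sum_mul]
  show condH w X Z - condH w X (fun ω => (Y ω, Z ω)) = _
  unfold condH
  rw [e1, e2, e3, e4]
  simp only [Finset.sum_sub_distrib, Finset.sum_add_distrib]
  ring

lemma p_le_pXZ [Fintype β] (hw : ∀ ω, 0 ≤ w ω) (X : Ω → α) (Y : Ω → β) (Z : Ω → γ) (x : α) (y : β) (z : γ) :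
    pr w (fun ω => (X ω, Y ω, Z ω)) (x, y, z) ≤ pr w (fun ω => (X ω, Z ω)) (x, z) := by
  rw [pr_marg_XZ X Y Z x z]
  exact Finset.single_le_sum (f := fun b => pr w (fun ω => (X ω, Y ω, Z ω)) (x, b, z))
    (fun b _ => pr_nonneg hw _ _) (Finset.mem_univ y)

lemma p_le_pYZ [Fintype α] (hw : ∀ ω, 0 ≤ w ω) (X : Ω → α) (Y : Ω → β) (Z : Ω → γ) (x : α) (y : β) (z : γ) :
    pr w (fun ω => (X ω, Y ω, Z ω)) (x, y, z) ≤ pr w (fun ω => (Y ω, Z ω)) (y, z) := by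
  rw [pr_marg_YZ X Y Z y z]
  exact Finset.single_le_sum (f := fun a => pr w (fun ω => (X ω, Y ω, Z ω)) (a, y, z))
    (fun a _ => pr_nonneg hw _ _) (Finset.mem_univ x)

lemma p_le_pZ [Fintype α] [Fintype β] (hw : ∀ ω, 0 ≤ w ω) (X : Ω → α) (Y : Ω → β) (Z : Ω → γ) (x : α) (y : β) (z : γ) :
    pr w (fun ω => (X ω, Y ω, Z ω)) (x, y, z) ≤ pr w Z z := by
  calc pr w (fun ω => (X ω, Y ω, Z ω)) (x, y, z) ≤ pr w (fun ω => (Y ω, Z ω)) (y, z) :=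
        p_le_pYZ hw X Y Z x y z
    _ ≤ pr w Z z := by
        rw [pr_marg_pair Y Z z]
        exact Finset.single_le_sum (f := fun b => pr w (fun ω => (Y ω, Z ω)) (b, z))
          (fun b _ => pr_nonneg hw _ _) (Finset.mem_univ y)

-- the per-term lower bound
lemma term_lb {p q r s : ℝ} (hp : 0 ≤ p) (hq : p ≤ q) (hr : p ≤ r) (hq0 : 0 ≤ q) (hr0 : 0 ≤ r)
    (hs : 0 < s) :
    (p - q * r / s) / Real.log 2 ≤
      p * Real.logb 2 p + p * Real.logb 2 s - p * Real.logb 2 q - p * Real.logb 2 r := by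
  rcases eq_or_lt_of_le hp with h0 | hp0
  · rw [← h0]
    simp only [zero_sub, zero_mul, sub_zero, zero_add, zero_div]
    apply div_nonpos_of_nonpos_of_nonneg
    · simp only [neg_nonpos]
      positivity
    · exact Real.log_nonneg one_le_two
  · have hq0' : 0 < q := lt_of_lt_of_le hp0 hq
    have hr0' : 0 < r := lt_of_lt_of_le hp0 hr
    have hlog2 : 0 < Real.log 2 := Real.log_pos one_lt_two
    have key : p - q * r / s ≤ p * Real.log p + p * Real.log s - p * Real.log q - p * Real.log r := by
      have ht : 0 < q * r / (p * s) := by positivity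
      have hlog : Real.log (q * r / (p * s)) ≤ q * r / (p * s) - 1 :=
        Real.log_le_sub_one_of_pos ht
      have hexp : Real.log (q * r / (p * s)) =
          Real.log q + Real.log r - Real.log p - Real.log s := by
        rw [Real.log_div (by positivity) (by positivity), Real.log_mul hq0'.ne' hr0'.ne',
          Real.log_mul hp0.ne' hs.ne']
        ring
      have hpt : p * (q * r / (p * s)) = q * r / s := by
        field_simp
      nlinarith [mul_le_mul_of_nonneg_left hlog hp]
    calc (p - q * r / s) / Real.log 2 ≤
        (p * Real.log p + p * Real.log s - p * Real.log q - p * Real.log r) / Real.log 2 := by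
          gcongr
      _ = p * Real.logb 2 p + p * Real.logb 2 s - p * Real.logb 2 q - p * Real.logb 2 r := by
          simp only [Real.logb]
          ring

lemma cMI_eq_zero [Fintype α] [Fintype β] [Fintype γ] (hw : ∀ ω, 0 ≤ w ω)
    {X : Ω → α} {Y : Ω → β} {Z : Ω → γ} (h : CondIndep w X Y Z) : cMI w X Y Z = 0 := by
  rw [cMI_eq_sum]
  apply Finset.sum_eq_zero
  intro x _
  apply Finset.sum_eq_zero
  intro y _
  apply Finset.sum_eq_zero
  intro z _
  set p := pr w (fun ω => (X ω, Y ω, Z ω)) (x, y, z) with hp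
  rcases eq_or_lt_of_le (pr_nonneg hw (fun ω => (X ω, Y ω, Z ω)) (x, y, z)) with h0 | h0
  · have hpz : p = 0 := hp.trans h0.symm
    rw [hpz]
    ring
  · rw [← hp] at h0
    have hq : 0 < pr w (fun ω => (X ω, Z ω)) (x, z) := lt_of_lt_of_le h0 (p_le_pXZ hw X Y Z x y z)
    have hr : 0 < pr w (fun ω => (Y ω, Z ω)) (y, z) := lt_of_lt_of_le h0 (p_le_pYZ hw X Y Z x y z)
    have hs : 0 < pr w Z z := lt_of_lt_of_le h0 (p_le_pZ hw X Y Z x y z)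
    have hlogs : Real.logb 2 p + Real.logb 2 (pr w Z z) =
        Real.logb 2 (pr w (fun ω => (X ω, Z ω)) (x, z)) +
          Real.logb 2 (pr w (fun ω => (Y ω, Z ω)) (y, z)) := by
      rw [← Real.logb_mul h0.ne' hs.ne', ← Real.logb_mul hq.ne' hr.ne', h x y z]
    nlinarith [hlogs]

lemma cMI_nonneg [Fintype α] [Fintype β] [Fintype γ] (hw : ∀ ω, 0 ≤ w ω)
    (X : Ω → α) (Y : Ω → β) (Z : Ω → γ) : 0 ≤ cMI w X Y Z := by
  rw [cMI_eq_sum]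
  conv_rhs => enter [2, x]; rw [Finset.sum_comm]
  conv_rhs => rw [Finset.sum_comm]
  apply Finset.sum_nonneg
  intro z _
  rcases eq_or_lt_of_le (pr_nonneg hw Z z) with h0 | h0
  · apply le_of_eq
    symm
    apply Finset.sum_eq_zero
    intro x _
    apply Finset.sum_eq_zero
    intro y _
    have hp0 : pr w (fun ω => (X ω, Y ω, Z ω)) (x, y, z) = 0 :=
      le_antisymm (le_trans (p_le_pZ hw X Y Z x y z) h0.ge)
        (pr_nonneg hw _ _)
    rw [hp0]
    ring
  · have hsum : ∑ x, ∑ y, (pr w (fun ω => (X ω, Y ω, Z ω)) (x, y, z)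
        - pr w (fun ω => (X ω, Z ω)) (x, z) * pr w (fun ω => (Y ω, Z ω)) (y, z) / pr w Z z)
        = 0 := by
      have hYZ : ∑ y, pr w (fun ω => (Y ω, Z ω)) (y, z) = pr w Z z :=
        (pr_marg_pair Y Z z).symm
      have inner : ∀ x, ∑ y, (pr w (fun ω => (X ω, Y ω, Z ω)) (x, y, z)
          - pr w (fun ω => (X ω, Z ω)) (x, z) * pr w (fun ω => (Y ω, Z ω)) (y, z) / pr w Z z)
          = pr w (fun ω => (X ω, Z ω)) (x, z) - pr w (fun ω => (X ω, Z ω)) (x, z) := by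
        intro x
        rw [Finset.sum_sub_distrib]
        congr 1
        · exact (pr_marg_XZ X Y Z x z).symm
        · have : ∀ y, pr w (fun ω => (X ω, Z ω)) (x, z) * pr w (fun ω => (Y ω, Z ω)) (y, z) / pr w Z z
              = pr w (fun ω => (X ω, Z ω)) (x, z) / pr w Z z * pr w (fun ω => (Y ω, Z ω)) (y, z) := by
            intro y; ring
          rw [Finset.sum_congr rfl (fun y _ => this y), ← Finset.mul_sum, hYZ]
          field_simp
      rw [Finset.sum_congr rfl (fun x _ => inner x)]
      simp
    have hdiv : (0 : ℝ) = (∑ x, ∑ y, (pr w (fun ω => (X ω, Y ω, Z ω)) (x, y, z)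
        - pr w (fun ω => (X ω, Z ω)) (x, z) * pr w (fun ω => (Y ω, Z ω)) (y, z) / pr w Z z))
          / Real.log 2 := by
      rw [hsum]; simp
    rw [hdiv, Finset.sum_div]
    apply Finset.sum_le_sum
    intro x _
    rw [Finset.sum_div]
    apply Finset.sum_le_sum
    intro y _
    exact term_lb (pr_nonneg hw _ _) (p_le_pXZ hw X Y Z x y z) (p_le_pYZ hw X Y Z x y z)
      (pr_nonneg hw _ _) (pr_nonneg hw _ _) h0

end Lemmas

theorem stmt19 {Ω α β γ : Type} [Fintype Ω] [Fintype α] [Fintype β] [Fintype γ]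
    (w : Ω → ℝ) (hw : IsPMF w) (A : Ω → α) (B : Ω → β) (E : Ω → γ) :
    (∀ (κ : Type) [Fintype κ] (U : Ω → κ),
        CondIndep w U B (fun ω => (A ω, E ω)) →
        cMI w A B U - cMI w A E U ≤ cMI w A B E) ∧
    CondIndep w E B (fun ω => (A ω, E ω)) ∧
    cMI w A B E - cMI w A E E = cMI w A B E := by
  obtain ⟨hw0, hw1⟩ := hw
  refine ⟨?_, ?_, ?_⟩
  · intro κ _ U hU
    have h3 : cMI w U B (fun ω => (A ω, E ω)) = 0 := cMI_eq_zero hw0 hU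
    have h1 : 0 ≤ cMI w A E (fun ω => (B ω, U ω)) := cMI_nonneg hw0 A E _
    have h2 : 0 ≤ cMI w U B E := cMI_nonneg hw0 U B E
    have hr1 : H w (fun ω => (A ω, E ω, B ω, U ω)) = H w (fun ω => (A ω, B ω, E ω, U ω)) :=
      H_comp (f := fun q : α × β × γ × κ => (q.1, q.2.2.1, q.2.1, q.2.2.2))
        (by intro ⟨a, b, e, u⟩ ⟨a', b', e', u'⟩ h; simp_all) (fun ω => (A ω, B ω, E ω, U ω))
    have hr2 : H w (fun ω => (U ω, B ω, A ω, E ω)) = H w (fun ω => (A ω, B ω, E ω, U ω)) :=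
      H_comp (f := fun q : α × β × γ × κ => (q.2.2.2, q.2.1, q.1, q.2.2.1))
        (by intro ⟨a, b, e, u⟩ ⟨a', b', e', u'⟩ h; simp_all) (fun ω => (A ω, B ω, E ω, U ω))
    have hr3 : H w (fun ω => (E ω, B ω, U ω)) = H w (fun ω => (B ω, E ω, U ω)) :=
      H_comp (f := fun q : β × γ × κ => (q.2.1, q.1, q.2.2))
        (by intro ⟨b, e, u⟩ ⟨b', e', u'⟩ h; simp_all) (fun ω => (B ω, E ω, U ω))
    have hr4 : H w (fun ω => (U ω, B ω, E ω)) = H w (fun ω => (B ω, E ω, U ω)) :=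
      H_comp (f := fun q : β × γ × κ => (q.2.2, q.1, q.2.1))
        (by intro ⟨b, e, u⟩ ⟨b', e', u'⟩ h; simp_all) (fun ω => (B ω, E ω, U ω))
    have hr5 : H w (fun ω => (U ω, E ω)) = H w (fun ω => (E ω, U ω)) :=
      H_comp (f := fun q : γ × κ => (q.2, q.1))
        (by intro ⟨e, u⟩ ⟨e', u'⟩ h; simp_all) (fun ω => (E ω, U ω))
    have hr6 : H w (fun ω => (U ω, A ω, E ω)) = H w (fun ω => (A ω, E ω, U ω)) :=
      H_comp (f := fun q : α × γ × κ => (q.2.2, q.1, q.2.1))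
        (by intro ⟨a, e, u⟩ ⟨a', e', u'⟩ h; simp_all) (fun ω => (A ω, E ω, U ω))
    have hr7 : H w (fun ω => (B ω, A ω, E ω)) = H w (fun ω => (A ω, B ω, E ω)) :=
      H_comp (f := fun q : α × β × γ => (q.2.1, q.1, q.2.2))
        (by intro ⟨a, b, e⟩ ⟨a', b', e'⟩ h; simp_all) (fun ω => (A ω, B ω, E ω))
    simp only [cMI, condH] at h1 h2 h3 ⊢
    rw [hr1, hr3] at h1
    rw [hr4, hr5] at h2
    rw [hr2, hr6, hr7] at h3
    linarith
  · intro x y z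
    obtain ⟨a, e⟩ := z
    by_cases hx : x = e
    · subst hx
      have h1 : pr w (fun ω => (E ω, B ω, A ω, E ω)) (x, y, a, x)
          = pr w (fun ω => (B ω, A ω, E ω)) (y, a, x) := by
        apply pr_congr
        intro ω
        simp only [Prod.ext_iff]
        tauto
      have h2 : pr w (fun ω => (E ω, A ω, E ω)) (x, a, x) = pr w (fun ω => (A ω, E ω)) (a, x) := by
        apply pr_congr
        intro ω
        simp only [Prod.ext_iff]
        tauto
      rw [h1, h2]
      ring
    · have h1 : pr w (fun ω => (E ω, B ω, A ω, E ω)) (x, y, a, e) = 0 := by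
        apply pr_eq_zero
        intro ω
        simp only [ne_eq, Prod.mk.injEq, not_and]
        intro h1' h2' h3' h4'
        exact hx (h1'.symm ▸ h4')
      have h2 : pr w (fun ω => (E ω, A ω, E ω)) (x, a, e) = 0 := by
        apply pr_eq_zero
        intro ω
        simp only [ne_eq, Prod.mk.injEq, not_and]
        intro h1' h2' h3'
        exact hx (h1'.symm ▸ h3')
      rw [h1, h2]
      ring
  · have hci : CondIndep w A E E := by
      intro x y z
      by_cases hy : y = z
      · subst hy
        have h1 : pr w (fun ω => (A ω, E ω, E ω)) (x, y, y) = pr w (fun ω => (A ω, E ω)) (x, y) := by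
          apply pr_congr
          intro ω
          simp only [Prod.ext_iff]
          tauto
        have h2 : pr w (fun ω => (E ω, E ω)) (y, y) = pr w E y := by
          apply pr_congr
          intro ω
          simp only [Prod.ext_iff]
          tauto
        rw [h1, h2]
      · have h1 : pr w (fun ω => (A ω, E ω, E ω)) (x, y, z) = 0 := by
          apply pr_eq_zero
          intro ω
          simp only [ne_eq, Prod.mk.injEq, not_and]
          intro h1' h2' h3'
          exact hy (h2'.symm ▸ h3')
        have h2 : pr w (fun ω => (E ω, E ω)) (y, z) = 0 := by
          apply pr_eq_zero
          intro ω
          simp only [ne_eq, Prod.mk.injEq, not_and]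
          intro h1' h2'
          exact hy (h1'.symm ▸ h2')
        rw [h1, h2]
        ring
    rw [cMI_eq_zero hw0 hci, sub_zero]
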